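/- Let r be a Schwartz function on ℝ with sup_s |r(s)| ≤ η < 1 and |r(−s)| = |r(s)| for all s, let z_0 > 0, and define δ(z) = exp( (1/(2πi)) ∫_{−z_0}^{z_0} log(1−|r(s)|^2)/(s−z) ds ) for z off [−z_0, z_0]. Then there exists a constant C ≥ 1 (depending on r and z_0) such that for all z ∈ ℂ with Im z ≠ 0: C^{−1} ≤ |δ(z)| ≤ C; that is, both |δ(z)| and |δ(z)|^{−1} are uniformly bounded on ℂ ∖ ℝ. -/

import Mathlib

/-- The solution `δ` of the scalar RHP:
`δ(z) = exp((1/2πi) ∫_{−z₀}^{z₀} log(1−|r(s)|²)/(s−z) ds)`. -/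
noncomputable def deltaFn (r : ℝ → ℂ) (z₀ : ℝ) (z : ℂ) : ℂ :=
  Complex.exp ((1 / (2 * (Real.pi : ℂ) * Complex.I)) *
    ∫ s in (-z₀)..z₀, ((Real.log (1 - ‖r s‖ ^ 2) : ℝ) : ℂ) / ((s : ℂ) - z))

private lemma re_exponent_bound (g : ℝ → ℝ) (M : ℝ) (hM : 0 ≤ M) (hg : ∀ s, |g s| ≤ M)
    (hgc : Continuous g) (z₀ : ℝ) (hz₀ : 0 < z₀) (z : ℂ) (hz : z.im ≠ 0) :
    |((1 / (2 * (Real.pi : ℂ) * Complex.I)) *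
      ∫ s in (-z₀)..z₀, ((g s : ℝ) : ℂ) / ((s : ℂ) - z)).re| ≤ M / 2 := by
  set x := z.re with hx
  set y := z.im with hyd
  have hy : y ≠ 0 := hz
  have hay : (0:ℝ) < |y| := abs_pos.mpr hy
  have hy2 : ∀ s : ℝ, (0:ℝ) < (s - x)^2 + y^2 := fun s => by positivity
  have hne : ∀ s : ℝ, ((s:ℂ) - z) ≠ 0 := by
    intro s h
    have h2 : ((s:ℂ) - z).im = 0 := by rw [h]; simp
    simp only [Complex.sub_im, Complex.ofReal_im, zero_sub, neg_eq_zero] at h2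
    exact hy h2
  have hcont : Continuous fun s : ℝ => ((g s : ℝ) : ℂ) / ((s:ℂ) - z) :=
    (Complex.continuous_ofReal.comp hgc).div
      (Complex.continuous_ofReal.sub continuous_const) hne
  have hint : IntervalIntegrable (fun s : ℝ => ((g s:ℝ):ℂ) / ((s:ℂ) - z))
      MeasureTheory.volume (-z₀) z₀ := hcont.intervalIntegrable _ _
  set w := ∫ s in (-z₀)..z₀, ((g s:ℝ):ℂ) / ((s:ℂ) - z) with hw
  -- imaginary part of the integral
  have him : w.im = ∫ s in (-z₀)..z₀, g s * y / ((s - x)^2 + y^2) := by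
    have h1 := Complex.imCLM.intervalIntegral_comp_comm hint
    have h1' : w.im = ∫ s in (-z₀)..z₀, (((g s:ℝ):ℂ) / ((s:ℂ) - z)).im := by
      rw [hw]; exact_mod_cast h1.symm
    rw [h1']
    apply intervalIntegral.integral_congr
    intro s _
    show (((g s:ℝ):ℂ) / ((s:ℂ) - z)).im = _
    have hd' : (s - x) * (s - x) + (0 - y) * (0 - y) ≠ 0 := ne_of_gt (by nlinarith [hy2 s])
    have hd : (s - x)^2 + y^2 ≠ 0 := (hy2 s).ne'
    rw [Complex.div_im]
    simp only [Complex.normSq_apply, Complex.ofReal_re, Complex.ofReal_im,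
      Complex.sub_re, Complex.sub_im, ← hx, ← hyd]
    rw [show (s-x)*(s-x)+(0-y)*(0-y) = (s-x)^2+y^2 from by ring, div_sub_div_same]
    congr 1
    ring
  -- real part of the full exponent
  have hre : ((1 / (2 * (Real.pi : ℂ) * Complex.I)) * w).re = (1/(2*Real.pi)) * w.im := by
    have hpi : (Real.pi : ℂ) ≠ 0 := Complex.ofReal_ne_zero.mpr Real.pi_ne_zero
    have hc : (1 / (2 * (Real.pi : ℂ) * Complex.I)) = (((2*Real.pi)⁻¹:ℝ):ℂ) * (-Complex.I) := by
      rw [one_div, mul_inv, Complex.inv_I]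
      push_cast
      ring
    rw [hc]
    simp [Complex.mul_re, Complex.mul_im]
    try ring
  -- bound the imaginary part via the Poisson kernel
  have hcont2 : Continuous fun s : ℝ => g s * y / ((s - x)^2 + y^2) :=
    ((hgc.mul continuous_const).div
      (((continuous_id.sub continuous_const).pow 2).add continuous_const)
      (fun s => (hy2 s).ne'))
  have hcontP : Continuous fun s : ℝ => M * (|y| / ((s - x)^2 + y^2)) :=
    continuous_const.mul (continuous_const.div
      (((continuous_id.sub continuous_const).pow 2).add continuous_const)
      (fun s => (hy2 s).ne'))
  have hderiv : ∀ s : ℝ, HasDerivAt (fun s : ℝ => M * Real.arctan ((s - x)/|y|))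
      (M * (|y| / ((s - x)^2 + y^2))) s := by
    intro s
    have h1 : HasDerivAt (fun s : ℝ => (s - x)/|y|) (1/|y|) s := by
      simpa using ((hasDerivAt_id s).sub_const x).div_const |y|
    have h2 := (Real.hasDerivAt_arctan ((s - x)/|y|)).comp s h1
    have h3 : HasDerivAt (fun s : ℝ => M * Real.arctan ((s - x)/|y|)) (M * (1 / (1 + ((s - x) / |y|) ^ 2) * (1 / |y|))) s := h2.const_mul M
    convert h3 using 1
    have hsq : |y|^2 = y^2 := sq_abs y
    rw [← hsq]
    have := hay.ne'
    have h5 : (s - x) ^ 2 + |y| ^ 2 ≠ 0 := by rw [hsq]; exact (hy2 s).ne'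
    field_simp
    ring
  have hPint : IntervalIntegrable (fun s : ℝ => M * (|y| / ((s - x)^2 + y^2)))
      MeasureTheory.volume (-z₀) z₀ := hcontP.intervalIntegrable _ _
  have hPval : (∫ s in (-z₀)..z₀, M * (|y| / ((s - x)^2 + y^2)))
      = M * Real.arctan ((z₀ - x)/|y|) - M * Real.arctan ((-z₀ - x)/|y|) := by
    exact intervalIntegral.integral_eq_sub_of_hasDerivAt (fun s _ => hderiv s) hPint
  have hPle : (∫ s in (-z₀)..z₀, M * (|y| / ((s - x)^2 + y^2))) ≤ M * Real.pi := by
    rw [hPval]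
    have h1 := Real.arctan_lt_pi_div_two ((z₀ - x)/|y|)
    have h2 := Real.neg_pi_div_two_lt_arctan ((-z₀ - x)/|y|)
    nlinarith [Real.pi_pos]
  have hab : (-z₀ : ℝ) ≤ z₀ := by linarith
  have habs : |w.im| ≤ M * Real.pi := by
    rw [him]
    calc |∫ s in (-z₀)..z₀, g s * y / ((s - x)^2 + y^2)|
        ≤ ∫ s in (-z₀)..z₀, |g s * y / ((s - x)^2 + y^2)| :=
          intervalIntegral.abs_integral_le_integral_abs hab
      _ ≤ ∫ s in (-z₀)..z₀, M * (|y| / ((s - x)^2 + y^2)) := by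
          apply intervalIntegral.integral_mono_on hab (hcont2.abs.intervalIntegrable _ _) hPint
          intro s _
          rw [abs_div, abs_mul]
          rw [abs_of_pos (hy2 s)]
          rw [div_le_iff₀ (hy2 s), mul_assoc, div_mul_cancel₀ _ (hy2 s).ne']
          exact mul_le_mul_of_nonneg_right (hg s) (abs_nonneg y)
      _ ≤ M * Real.pi := hPle
  rw [hre, abs_mul, abs_of_pos (by positivity : (0:ℝ) < 1/(2*Real.pi))]
  calc 1/(2*Real.pi) * |w.im| ≤ 1/(2*Real.pi) * (M * Real.pi) := by
        apply mul_le_mul_of_nonneg_left habs (by positivity)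
    _ = M / 2 := by field_simp

/-- Uniform two-sided bound: there is `C ≥ 1` such that `C⁻¹ ≤ |δ(z)| ≤ C` for all
`z` off the real axis. -/
theorem delta_uniformly_bounded (r : SchwartzMap ℝ ℂ) (η : ℝ) (hη : η < 1)
    (hr : ∀ s : ℝ, ‖r s‖ ≤ η) (hsym : ∀ s : ℝ, ‖r (-s)‖ = ‖r s‖)
    (z₀ : ℝ) (hz₀ : 0 < z₀) :
    ∃ C : ℝ, 1 ≤ C ∧ ∀ z : ℂ, z.im ≠ 0 →
      C⁻¹ ≤ ‖deltaFn (fun s => r s) z₀ z‖ ∧ ‖deltaFn (fun s => r s) z₀ z‖ ≤ C := by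
  have hη0 : 0 ≤ η := (norm_nonneg (r 0)).trans (hr 0)
  have hη2 : η^2 < 1 := by nlinarith
  have hpos : (0:ℝ) < 1 - η^2 := by linarith
  set g : ℝ → ℝ := fun s => Real.log (1 - ‖r s‖^2) with hgdef
  have hle : ∀ s, 1 - η^2 ≤ 1 - ‖r s‖^2 := by
    intro s
    have : ‖r s‖^2 ≤ η^2 := by nlinarith [norm_nonneg (r s), hr s]
    linarith
  set M : ℝ := -Real.log (1 - η^2) with hMdef
  have hM : 0 ≤ M := by
    have h := Real.log_nonpos (le_of_lt hpos) (by nlinarith : 1 - η^2 ≤ 1)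
    rw [hMdef]; linarith
  have hg : ∀ s, |g s| ≤ M := by
    intro s
    have h1 : g s ≤ 0 := Real.log_nonpos (by nlinarith [hle s]) (by nlinarith [norm_nonneg (r s)])
    have h2 : Real.log (1 - η^2) ≤ g s := Real.log_le_log hpos (hle s)
    rw [abs_le]
    constructor <;> [skip; skip] <;> rw [hMdef] <;> linarith
  have hgc : Continuous g := by
    have hc : Continuous fun s : ℝ => 1 - ‖r s‖^2 :=
      continuous_const.sub ((r.continuous.norm).pow 2)
    exact hc.log (fun s => ne_of_gt (lt_of_lt_of_le hpos (hle s)))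
  refine ⟨Real.exp (M/2), Real.one_le_exp (by positivity), fun z hz => ?_⟩
  have hb := re_exponent_bound g M hM hg hgc z₀ hz₀ z hz
  rw [abs_le] at hb
  have hnorm : ‖deltaFn (fun s => r s) z₀ z‖ = Real.exp (((1 / (2 * (Real.pi : ℂ) * Complex.I)) *
      ∫ s in (-z₀)..z₀, ((g s : ℝ) : ℂ) / ((s : ℂ) - z)).re) := by
    simp only [deltaFn, hgdef, Complex.norm_exp]
  rw [hnorm]
  constructor
  · rw [← Real.exp_neg]
    exact Real.exp_le_exp.mpr hb.1
  · exact Real.exp_le_exp.mpr hb.2
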